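/- For a simplicial complex Δ on [n] and α ∈ ℕ^n with positive entries, the expansion of the Stanley–Reisner ideal equals the Stanley–Reisner ideal of the expansion: I_Δ^α = I_{Δ^α}. -/

import Mathlib

open Finset

/-- An abstract simplicial complex on vertex type `V`: a downward closed
family of finite subsets of `V`. -/
structure AbstractComplex (V : Type*) where
  faces : Set (Finset V)
  down_closed : ∀ {s t : Finset V}, s ∈ faces → t ⊆ s → t ∈ faces

namespace AbstractComplex

variable {V : Type*}

/-- A facet is a maximal face. -/
def IsFacet (Δ : AbstractComplex V) (s : Finset V) : Prop :=
  s ∈ Δ.faces ∧ ∀ t ∈ Δ.faces, s ⊆ t → s = t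

/-- A complex is pure if all facets have the same cardinality. -/
def IsPure (Δ : AbstractComplex V) : Prop :=
  ∀ s t : Finset V, Δ.IsFacet s → Δ.IsFacet t → s.card = t.card

/-- The link of a (potential) face `F`. -/
def link [DecidableEq V] (Δ : AbstractComplex V) (F : Finset V) : AbstractComplex V where
  faces := {G | G ∩ F = ∅ ∧ G ∪ F ∈ Δ.faces}
  down_closed := by
    rintro s t ⟨h1, h2⟩ hts
    refine ⟨subset_empty.mp ?_, Δ.down_closed h2 (union_subset_union hts subset_rfl)⟩
    exact h1 ▸ inter_subset_inter hts subset_rfl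

/-- The faces of cardinality `q` (i.e. dimension `q - 1`). -/
abbrev Face (Δ : AbstractComplex V) (q : ℕ) := {s : Finset V // s ∈ Δ.faces ∧ s.card = q}

/-- The simplicial boundary map on reduced chains with coefficients in `K`,
from chains spanned by faces of cardinality `q+1` to those spanned by faces of
cardinality `q`. -/
noncomputable def boundary (K : Type*) [Field K] [LinearOrder V]
    (Δ : AbstractComplex V) (q : ℕ) :
    (Δ.Face (q + 1) →₀ K) →ₗ[K] (Δ.Face q →₀ K) :=
  Finsupp.lsum K fun s => LinearMap.toSpanSingleton K _
    (∑ x ∈ s.1.attach,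
      ((-1 : K) ^ (s.1.filter (fun y => y < x.1)).card) •
        Finsupp.single (⟨s.1.erase x.1,
          Δ.down_closed s.2.1 (erase_subset _ _), by
            rw [card_erase_of_mem x.2, s.2.2]; omega⟩ : Δ.Face q) (1 : K))

/-- `Δ.RHTriv K i` says that the `i`-th reduced simplicial homology of `Δ`
with coefficients in `K` vanishes. -/
def RHTriv (K : Type*) [Field K] [LinearOrder V] (Δ : AbstractComplex V) : ℤ → Prop
  | Int.ofNat i =>
      LinearMap.ker (Δ.boundary K i) ≤ LinearMap.range (Δ.boundary K (i + 1))
  | Int.negSucc 0 => ⊤ ≤ LinearMap.range (Δ.boundary K 0)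
  | Int.negSucc (_ + 1) => True

/-- `Δ.dimLT i` means `i < dim Δ`. -/
def dimLT (Δ : AbstractComplex V) (i : ℤ) : Prop :=
  ∃ s ∈ Δ.faces, i + 2 ≤ (s.card : ℤ)

/-- Cohen–Macaulayness over `K`, via Reisner's criterion. -/
def IsCM (K : Type*) [Field K] [LinearOrder V] (Δ : AbstractComplex V) : Prop :=
  ∀ F ∈ Δ.faces, ∀ i : ℤ, (Δ.link F).dimLT i → (Δ.link F).RHTriv K i

/-- `CM_t`: pure, and the link of every face of cardinality at least `t`
is Cohen–Macaulay. -/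
def IsCMt (K : Type*) [Field K] [LinearOrder V] (t : ℕ) (Δ : AbstractComplex V) : Prop :=
  Δ.IsPure ∧ ∀ F ∈ Δ.faces, t ≤ F.card → IsCM K (Δ.link F)

/-- Buchsbaum-ness: pure and the reduced homology of the link of every nonempty
face vanishes below its dimension. -/
def IsBuchsbaum (K : Type*) [Field K] [LinearOrder V] (Δ : AbstractComplex V) : Prop :=
  Δ.IsPure ∧ ∀ G ∈ Δ.faces, G ≠ ∅ →
    ∀ i : ℤ, (Δ.link G).dimLT i → (Δ.link G).RHTriv K i

end AbstractComplex

/-- The expansion `F^α` of a finite vertex set. -/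
def expandSet {V : Type*} (α : V → ℕ) (F : Finset V) : Finset (Σ i, Fin (α i)) :=
  F.sigma fun _ => Finset.univ

namespace AbstractComplex

/-- The expansion `Δ^α` of a simplicial complex: the complex generated by the
expansions of the facets of `Δ`. -/
def expand {V : Type*} (Δ : AbstractComplex V) (α : V → ℕ) :
    AbstractComplex (Σ i, Fin (α i)) where
  faces := {σ | ∃ F, Δ.IsFacet F ∧ σ ⊆ expandSet α F}
  down_closed := fun ⟨F, hF, hsub⟩ hts => ⟨F, hF, hts.trans hsub⟩

end AbstractComplex

/-- A linear order on the expanded vertex set (lexicographic). -/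
noncomputable instance sigmaFinLinearOrder {V : Type*} [LinearOrder V] {α : V → ℕ} :
    LinearOrder (Σ i, Fin (α i)) :=
  LinearOrder.lift' (toLex : (Σ i, Fin (α i)) → Σₗ i, Fin (α i)) toLex.injective

/-- `I` is a monomial ideal: generated by a set of monomials. -/
def IsMonomialIdeal {K : Type*} [Field K] {σ : Type*} (I : Ideal (MvPolynomial σ K)) : Prop :=
  ∃ M : Set (σ →₀ ℕ), I = Ideal.span ((fun m => MvPolynomial.monomial m (1 : K)) '' M)

/-- The minimal monomial generators `G(I)` of a monomial ideal, recorded by their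
exponent vectors: monomials in `I` that are minimal with respect to divisibility. -/
def minGens {K : Type*} [Field K] {σ : Type*} (I : Ideal (MvPolynomial σ K)) : Set (σ →₀ ℕ) :=
  {m | MvPolynomial.monomial m (1 : K) ∈ I ∧
    ∀ m', MvPolynomial.monomial m' (1 : K) ∈ I → m' ≤ m → m' = m}

/-- The prime ideal `P_j = (x_{j1}, …, x_{jk_j})` in the expanded polynomial ring. -/
noncomputable def varIdeal {K : Type*} [Field K] {V : Type*} (α : V → ℕ) (j : V) :
    Ideal (MvPolynomial (Σ i, Fin (α i)) K) :=
  Ideal.span (Set.range fun r : Fin (α j) => MvPolynomial.X ⟨j, r⟩)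

/-- The Bayati–Herzog expansion `I^α = Σ_{u ∈ G(I)} P_1^{ν_1(u)} ⋯ P_n^{ν_n(u)}`
of a monomial ideal. -/
noncomputable def expandIdeal {K : Type*} [Field K] {V : Type*} [Fintype V] (α : V → ℕ)
    (I : Ideal (MvPolynomial V K)) : Ideal (MvPolynomial (Σ i, Fin (α i)) K) :=
  ⨆ m ∈ minGens I, ∏ j : V, (varIdeal α j) ^ (m j)

/-- The Stanley–Reisner ideal of `Δ`: generated by the squarefree monomials
corresponding to non-faces of `Δ`. -/
noncomputable def srIdeal (K : Type*) [Field K] {V : Type*} (Δ : AbstractComplex V) :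
    Ideal (MvPolynomial V K) :=
  Ideal.span {p | ∃ G : Finset V, G ∉ Δ.faces ∧ p = ∏ i ∈ G, MvPolynomial.X i}

namespace ExpandAux

open MvPolynomial

/-- Indicator finsupp of a finset. -/
noncomputable def ind {σ : Type*} (H : Finset σ) : σ →₀ ℕ := ∑ v ∈ H, Finsupp.single v 1

lemma ind_apply {σ : Type*} (H : Finset σ) (w : σ) [Decidable (w ∈ H)] :
    ind H w = if w ∈ H then 1 else 0 := by
  classical
  rw [ind, Finset.sum_apply']
  rw [Finset.sum_congr rfl (fun v _ => Finsupp.single_apply (a := v) (a' := w) (b := 1))]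
  simp [Finset.sum_ite_eq]

lemma ind_le_iff {σ : Type*} (H : Finset σ) (u : σ →₀ ℕ) :
    ind H ≤ u ↔ H ⊆ u.support := by
  classical
  rw [Finsupp.le_def]
  constructor
  · intro h v hv
    have := h v
    rw [ind_apply, if_pos hv] at this
    rw [Finsupp.mem_support_iff]
    omega
  · intro h v
    rw [ind_apply]
    split
    · next hv =>
      have := h hv
      rw [Finsupp.mem_support_iff] at this
      omega
    · exact Nat.zero_le _

lemma monomial_ind {σ K : Type*} [Field K] (H : Finset σ) :
    (monomial (ind H) (1 : K)) = ∏ i ∈ H, X i := by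
  classical
  induction H using Finset.induction_on with
  | empty => simp [ind]
  | insert a s h ih =>
    rw [Finset.prod_insert h, ← ih, ind, Finset.sum_insert h, ← ind]
    rw [X, monomial_mul, one_mul]

lemma srIdeal_eq_span {K : Type*} [Field K] {V : Type*} (Δ : AbstractComplex V) :
    srIdeal K Δ = Ideal.span
      ((fun m => monomial m (1 : K)) '' {m | ∃ G : Finset V, G ∉ Δ.faces ∧ m = ind G}) := by
  unfold srIdeal
  congr 1
  ext p
  constructor
  · rintro ⟨G, hG, rfl⟩
    exact ⟨ind G, ⟨G, hG, rfl⟩, by simpa using (monomial_ind (K := K) G)⟩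
  · rintro ⟨m, ⟨G, hG, rfl⟩, rfl⟩
    exact ⟨G, hG, by simpa using (monomial_ind (K := K) G)⟩

lemma monomial_mem_srIdeal_iff {K : Type*} [Field K] {V : Type*} (Δ : AbstractComplex V)
    (u : V →₀ ℕ) :
    monomial u (1 : K) ∈ srIdeal K Δ ↔ u.support ∉ Δ.faces := by
  classical
  rw [srIdeal_eq_span, mem_ideal_span_monomial_image]
  rw [support_monomial, if_neg (one_ne_zero)]
  constructor
  · intro h hsup
    obtain ⟨si, ⟨G, hG, rfl⟩, hle⟩ := h u (Finset.mem_singleton_self u)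
    rw [ind_le_iff] at hle
    exact hG (Δ.down_closed hsup (fun v hv => hle hv))
  · intro h xi hxi
    have hx : xi = u := Finset.mem_singleton.mp hxi
    rw [hx]
    exact ⟨ind u.support, ⟨u.support, h, rfl⟩, (ind_le_iff _ _).2 (fun v hv => hv)⟩

section Expanded

variable {K : Type*} [Field K] {V : Type*} {α : V → ℕ}

/-- Projection of a set of expanded vertices. -/
noncomputable def proj [DecidableEq V] (H : Finset (Σ i, Fin (α i))) : Finset V :=
  H.image Sigma.fst

lemma mem_expandSet {F : Finset V} {v : Σ i, Fin (α i)} :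
    v ∈ expandSet α F ↔ v.1 ∈ F := by
  obtain ⟨i, r⟩ := v
  simp [expandSet, Finset.mem_sigma]

lemma exists_facet_superset [Fintype V] {Δ : AbstractComplex V} {s : Finset V}
    (hs : s ∈ Δ.faces) : ∃ F, Δ.IsFacet F ∧ s ⊆ F := by
  classical
  obtain ⟨F, ⟨hF, hsF⟩, hmax⟩ := Set.Finite.exists_maximalFor Finset.card
    {t : Finset V | t ∈ Δ.faces ∧ s ⊆ t} (Set.toFinite _) ⟨s, hs, Finset.Subset.refl s⟩
  refine ⟨F, ⟨hF, fun t ht hFt => ?_⟩, hsF⟩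
  exact Finset.eq_of_subset_of_card_le hFt
    (hmax ⟨ht, hsF.trans hFt⟩ (Finset.card_le_card hFt))

lemma mem_expand_faces_iff [Fintype V] [DecidableEq V] {Δ : AbstractComplex V}
    (H : Finset (Σ i, Fin (α i))) :
    H ∈ (Δ.expand α).faces ↔ proj H ∈ Δ.faces := by
  constructor
  · rintro ⟨F, hF, hsub⟩
    refine Δ.down_closed hF.1 (fun i hi => ?_)
    obtain ⟨v, hv, rfl⟩ := Finset.mem_image.mp hi
    exact mem_expandSet.mp (hsub hv)
  · intro h
    obtain ⟨F, hF, hsub⟩ := exists_facet_superset h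
    refine ⟨F, hF, fun v hv => mem_expandSet.mpr (hsub ?_)⟩
    exact Finset.mem_image.mpr ⟨v, hv, rfl⟩

/-- Row sum of an exponent vector. -/
def rsum (j : V) (u : (Σ i, Fin (α i)) →₀ ℕ) : ℕ := ∑ r : Fin (α j), u ⟨j, r⟩

lemma rsum_add (j : V) (u v : (Σ i, Fin (α i)) →₀ ℕ) :
    rsum j (u + v) = rsum j u + rsum j v := by
  simp [rsum, Finset.sum_add_distrib]

lemma rsum_single (j : V) (r : Fin (α j)) :
    rsum j (Finsupp.single (⟨j, r⟩ : Σ i, Fin (α i)) 1) = 1 := by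
  classical
  rw [rsum, Finset.sum_eq_single r]
  · simp
  · intro b _ hb
    rw [Finsupp.single_apply, if_neg]
    intro hcon
    apply hb
    exact (by simpa using hcon : r = b).symm
  · simp

lemma exists_of_rsum_pos {j : V} {u : (Σ i, Fin (α i)) →₀ ℕ} (h : 1 ≤ rsum j u) :
    ∃ r : Fin (α j), (⟨j, r⟩ : Σ i, Fin (α i)) ∈ u.support := by
  by_contra hcon
  push_neg at hcon
  simp only [Finsupp.mem_support_iff, not_not] at hcon
  simp [rsum, hcon] at h

lemma varIdeal_pow_le (j : V) (k : ℕ) :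
    varIdeal (K := K) α j ^ k ≤
      Ideal.span ((fun u => monomial u (1 : K)) '' {u | k ≤ rsum j u}) := by
  induction k with
  | zero =>
    refine le_trans le_top (le_of_eq ?_)
    symm
    rw [Ideal.eq_top_iff_one]
    have h1 : (monomial (0 : (Σ i, Fin (α i)) →₀ ℕ) (1 : K)) = 1 := by simp
    exact h1 ▸ Ideal.subset_span ⟨0, by simp, rfl⟩
  | succ k ih =>
    rw [pow_succ]
    calc varIdeal (K := K) α j ^ k * varIdeal α j
        ≤ Ideal.span ((fun u => monomial u (1 : K)) '' {u | k ≤ rsum j u}) *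
          Ideal.span ((fun u => monomial u (1 : K)) ''
            (Set.range fun r : Fin (α j) => Finsupp.single ⟨j, r⟩ 1)) := by
          refine Ideal.mul_mono ih (le_of_eq ?_)
          unfold varIdeal
          congr 1
          ext p
          simp only [Set.mem_range, Set.mem_image]
          constructor
          · rintro ⟨r, rfl⟩
            exact ⟨Finsupp.single ⟨j, r⟩ 1, ⟨r, rfl⟩, rfl⟩
          · rintro ⟨m, ⟨r, rfl⟩, rfl⟩
            exact ⟨r, rfl⟩
      _ ≤ Ideal.span ((fun u => monomial u (1 : K)) '' {u | k + 1 ≤ rsum j u}) := by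
          rw [Ideal.span_mul_span']
          refine Ideal.span_le.2 ?_
          rintro x hx
          obtain ⟨a, ⟨ua, hua, rfl⟩, b, ⟨ub, ⟨r, rfl⟩, rfl⟩, rfl⟩ := hx
          simp only [Set.mem_setOf_eq] at hua
          refine Ideal.subset_span ⟨ua + Finsupp.single ⟨j, r⟩ 1, ?_, ?_⟩
          · simp only [Set.mem_setOf_eq, rsum_add, rsum_single]
            omega
          · simp only [monomial_mul, one_mul]

lemma prod_varIdeal_le (m : V →₀ ℕ) (S : Finset V) :
    (∏ j ∈ S, varIdeal (K := K) α j ^ (m j)) ≤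
      Ideal.span ((fun u => monomial u (1 : K)) '' {u | ∀ j ∈ S, m j ≤ rsum j u}) := by
  classical
  induction S using Finset.induction_on with
  | empty =>
    refine le_trans le_top (le_of_eq ?_)
    symm
    rw [Ideal.eq_top_iff_one]
    have h1 : (monomial (0 : (Σ i, Fin (α i)) →₀ ℕ) (1 : K)) = 1 := by simp
    exact h1 ▸ Ideal.subset_span ⟨0, by simp, rfl⟩
  | insert a s h ih =>
    rw [Finset.prod_insert h]
    calc varIdeal (K := K) α a ^ (m a) * ∏ j ∈ s, varIdeal (K := K) α j ^ (m j)
        ≤ Ideal.span ((fun u => monomial u (1 : K)) '' {u | m a ≤ rsum a u}) *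
          Ideal.span ((fun u => monomial u (1 : K)) '' {u | ∀ j ∈ s, m j ≤ rsum j u}) :=
          Ideal.mul_mono (varIdeal_pow_le a (m a)) ih
      _ ≤ _ := by
          rw [Ideal.span_mul_span']
          refine Ideal.span_le.2 ?_
          rintro x hx
          obtain ⟨_, ⟨ua, hua, rfl⟩, _, ⟨ub, hub, rfl⟩, rfl⟩ := hx
          simp only [Set.mem_setOf_eq] at hua hub
          refine Ideal.subset_span ⟨ua + ub, ?_, by simp only [monomial_mul, one_mul]⟩
          intro j hj
          rw [rsum_add]
          rcases Finset.mem_insert.mp hj with rfl | hj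
          · exact le_trans hua (Nat.le_add_right _ _)
          · exact le_trans (hub j hj) (Nat.le_add_left _ _)

lemma exists_minimal_nonface {Δ : AbstractComplex V} (A : Finset V) (hA : A ∉ Δ.faces) :
    ∃ G ⊆ A, G ∉ Δ.faces ∧ ∀ B ⊂ G, B ∈ Δ.faces := by
  classical
  induction A using Finset.strongInductionOn with
  | _ A ih =>
    by_cases h : ∀ B ⊂ A, B ∈ Δ.faces
    · exact ⟨A, Finset.Subset.refl A, hA, h⟩
    · push_neg at h
      obtain ⟨B, hBA, hB⟩ := h
      obtain ⟨G, hGB, hG⟩ := ih B hBA hB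
      exact ⟨G, hGB.trans hBA.subset, hG⟩

lemma ind_mem_minGens {Δ : AbstractComplex V} {G : Finset V} (hG : G ∉ Δ.faces)
    (hmin : ∀ B ⊂ G, B ∈ Δ.faces) : ind G ∈ minGens (srIdeal K Δ) := by
  classical
  constructor
  · rw [monomial_mem_srIdeal_iff]
    intro h
    apply hG
    refine Δ.down_closed h (fun v hv => ?_)
    rw [Finsupp.mem_support_iff, ind_apply, if_pos hv]
    exact one_ne_zero
  · intro m' hm' hle
    rw [monomial_mem_srIdeal_iff] at hm'
    have hsub : m'.support ⊆ G := by
      intro v hv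
      rw [Finsupp.mem_support_iff] at hv
      have := hle v
      rw [ind_apply] at this
      by_contra hvG
      rw [if_neg hvG] at this
      omega
    have hsupp : m'.support = G := by
      by_contra hne
      exact hm' (hmin _ (lt_of_le_of_ne hsub hne))
    ext v
    have h1 := hle v
    rw [ind_apply] at h1 ⊢
    by_cases hv : v ∈ G
    · rw [if_pos hv]
      have hv' : v ∈ m'.support := by rw [hsupp]; exact hv
      rw [Finsupp.mem_support_iff] at hv'
      rw [if_pos hv] at h1
      omega
    · rw [if_neg hv]
      have hv' : v ∉ m'.support := fun hc => hv (by rw [← hsupp]; exact hc)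
      rw [Finsupp.mem_support_iff, not_not] at hv'
      exact hv'

lemma prod_X_mem_prod_varIdeal [DecidableEq V] (G : Finset V) :
    ∀ H : Finset (Σ i, Fin (α i)), G ⊆ proj (α := α) H →
      (∏ v ∈ H, X v : MvPolynomial (Σ i, Fin (α i)) K) ∈ ∏ j ∈ G, varIdeal α j := by
  classical
  induction G using Finset.induction_on with
  | empty =>
    intro H _
    simp only [Finset.prod_empty, Ideal.one_eq_top, Submodule.mem_top]
  | insert a s ha ih =>
    intro H hsub
    have haH : a ∈ proj (α := α) H := hsub (by simp)
    obtain ⟨v, hvH, hva⟩ := Finset.mem_image.mp haH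
    rw [Finset.prod_insert ha, ← Finset.prod_erase_mul H _ hvH]
    rw [mul_comm (∏ x ∈ H.erase v, X x) (X v)]
    refine Ideal.mul_mem_mul ?_ (ih (H.erase v) ?_)
    · subst hva
      refine Ideal.subset_span (Set.mem_range.mpr ⟨v.2, ?_⟩)
      show X (⟨v.fst, v.snd⟩ : Σ i, Fin (α i)) = X v
      rfl
    · intro j hj
      have hjs : j ∈ s := hj
      have hjG : j ∈ proj (α := α) H := hsub (Finset.mem_insert_of_mem hjs)
      obtain ⟨w, hwH, hwj⟩ := Finset.mem_image.mp hjG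
      refine Finset.mem_image.mpr ⟨w, Finset.mem_erase.mpr ⟨?_, hwH⟩, hwj⟩
      intro hcon
      subst hcon
      rw [hwj] at hva
      exact ha (hva ▸ hjs)

end Expanded

end ExpandAux

/-- `I_Δ^α = I_{Δ^α}`. -/
theorem expandIdeal_srIdeal (K : Type*) [Field K] {V : Type*} [Fintype V]
    (Δ : AbstractComplex V) (α : V → ℕ) (hα : ∀ i, 1 ≤ α i) :
    expandIdeal α (srIdeal K Δ) = srIdeal K (Δ.expand α) := by
  classical
  apply le_antisymm
  · unfold expandIdeal
    refine iSup₂_le fun m hm => ?_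
    have hsupm : m.support ∉ Δ.faces := by
      have h1 := hm.1
      rwa [ExpandAux.monomial_mem_srIdeal_iff] at h1
    refine le_trans (ExpandAux.prod_varIdeal_le (K := K) (α := α) m Finset.univ) ?_
    refine Ideal.span_le.2 ?_
    rintro p ⟨u, hu, rfl⟩
    simp only [Set.mem_setOf_eq] at hu
    rw [SetLike.mem_coe, ExpandAux.monomial_mem_srIdeal_iff,
      ExpandAux.mem_expand_faces_iff]
    intro hface
    apply hsupm
    refine Δ.down_closed hface ?_
    intro j hj
    rw [Finsupp.mem_support_iff] at hj
    obtain ⟨r, hr⟩ := ExpandAux.exists_of_rsum_pos (j := j) (u := u)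
      (le_trans (by omega) (hu j (Finset.mem_univ j)))
    exact Finset.mem_image.mpr ⟨⟨j, r⟩, hr, rfl⟩
  · rw [srIdeal]
    refine Ideal.span_le.2 ?_
    rintro p ⟨H, hH, rfl⟩
    have hproj : ExpandAux.proj (α := α) H ∉ Δ.faces := fun h =>
      hH ((ExpandAux.mem_expand_faces_iff H).mpr h)
    obtain ⟨G, hGsub, hGnf, hGmin⟩ := ExpandAux.exists_minimal_nonface _ hproj
    have hmem : ExpandAux.ind G ∈ minGens (srIdeal K Δ) :=
      ExpandAux.ind_mem_minGens hGnf hGmin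
    have hle : (∏ j : V, varIdeal (K := K) α j ^ (ExpandAux.ind G j)) ≤
        expandIdeal α (srIdeal K Δ) :=
      le_iSup₂ (f := fun m (_ : m ∈ minGens (srIdeal K Δ)) =>
        ∏ j : V, varIdeal (K := K) α j ^ (m j)) (ExpandAux.ind G) hmem
    apply hle
    have heq : (∏ j : V, varIdeal (K := K) α j ^ (ExpandAux.ind G j)) =
        ∏ j ∈ G, varIdeal α j := by
      rw [← Finset.prod_subset (Finset.subset_univ G)
        (fun j _ hj => by rw [ExpandAux.ind_apply, if_neg hj, pow_zero])]
      exact Finset.prod_congr rfl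
        (fun j hj => by rw [ExpandAux.ind_apply, if_pos hj, pow_one])
    rw [heq]
    exact ExpandAux.prod_X_mem_prod_varIdeal G H hGsub
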